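/- There exists an instance with 2 agents and 7 indivisible goods, with additive subjective utilities for the two agents and an additive market valuation, in which no allocation of the goods is simultaneously SD-EF1 with respect to both agents' subjective utilities and SD-EF1 with respect to the market valuation. In particular, this holds whenever the market valuation induces the strict ranking g1≻g2≻g3≻g4≻g5≻g6≻g7, agent 1's utility induces g1≻g3≻g2≻g5≻g4≻g7≻g6, and agent 2's utility induces g1≻g5≻g2≻g3≻g6≻g7≻g4. -/
import Mathlib


open Finset

/-- `sdPair w X Y` : bundle `X` stochastically dominates `Y` minus some good,
under valuation `w` (the SD-EF1 condition for one ordered pair of agents). -/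
def sdPair {M : Type*} [Fintype M] [DecidableEq M] (w : M → ℝ) (X Y : Finset M) : Prop :=
  Y = ∅ ∨ ∃ g ∈ Y, ∀ h : M,
    ((Y.erase g).filter (fun x => w h ≤ w x)).card ≤ (X.filter (fun x => w h ≤ w x)).card

/-- ranking of agent 1 : g1 ≻ g3 ≻ g2 ≻ g5 ≻ g4 ≻ g7 ≻ g6 (0-indexed ranks). -/
def rk1 : Fin 7 → ℕ := ![0, 2, 1, 4, 3, 6, 5]

/-- ranking of agent 2 : g1 ≻ g5 ≻ g2 ≻ g3 ≻ g6 ≻ g7 ≻ g4 (0-indexed ranks). -/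
def rk2 : Fin 7 → ℕ := ![0, 2, 3, 6, 1, 4, 5]

/-- purely combinatorial version of `sdPair` via a ranking function. -/
def sdPairN (rk : Fin 7 → ℕ) (X Y : Finset (Fin 7)) : Prop :=
  Y = ∅ ∨ ∃ g ∈ Y, ∀ h : Fin 7,
    ((Y.erase g).filter (fun x => rk x ≤ rk h)).card ≤ (X.filter (fun x => rk x ≤ rk h)).card

instance (rk : Fin 7 → ℕ) (X Y : Finset (Fin 7)) : Decidable (sdPairN rk X Y) := by
  unfold sdPairN; infer_instance

lemma sdPair_iff (w : Fin 7 → ℝ) (rk : Fin 7 → ℕ)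
    (h : ∀ g g', rk g < rk g' ↔ w g' < w g) (X Y : Finset (Fin 7)) :
    sdPair w X Y ↔ sdPairN rk X Y := by
  have key : ∀ x h' : Fin 7, (w h' ≤ w x) ↔ (rk x ≤ rk h') := by
    intro x h'
    rw [← not_lt, ← not_lt, not_iff_not, h]
  unfold sdPair sdPairN
  apply or_congr Iff.rfl
  apply exists_congr; intro g
  apply and_congr Iff.rfl
  apply forall_congr'; intro h'
  have e1 : (Y.erase g).filter (fun x => w h' ≤ w x)
      = (Y.erase g).filter (fun x => rk x ≤ rk h') := by
    apply Finset.filter_congr; intro x _; simp [key]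
  have e2 : X.filter (fun x => w h' ≤ w x) = X.filter (fun x => rk x ≤ rk h') := by
    apply Finset.filter_congr; intro x _; simp [key]
  rw [e1, e2]

set_option maxRecDepth 10000 in
lemma main_decide : ∀ A : Finset (Fin 7),
    ¬ (sdPairN rk1 A Aᶜ ∧ sdPairN rk2 Aᶜ A ∧ sdPairN (fun g => (g : ℕ)) A Aᶜ ∧
       sdPairN (fun g => (g : ℕ)) Aᶜ A) := by
  decide

/-- With 2 agents and 7 goods whose market values induce the ranking
g1 ≻ ⋯ ≻ g7 and whose subjective utilities induce the rankings `rk1`, `rk2`,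
no allocation is SD-EF1 w.r.t. both the subjective utilities and the market
valuation. -/

theorem stmt_2 (u₁ u₂ v : Fin 7 → ℝ)
    (hnn₁ : ∀ g, 0 ≤ u₁ g) (hnn₂ : ∀ g, 0 ≤ u₂ g) (hnnv : ∀ g, 0 ≤ v g)
    (h₁ : ∀ g g', rk1 g < rk1 g' ↔ u₁ g' < u₁ g)
    (h₂ : ∀ g g', rk2 g < rk2 g' ↔ u₂ g' < u₂ g)
    (hv : ∀ g g' : Fin 7, (g : ℕ) < (g' : ℕ) ↔ v g' < v g)
    (A₁ A₂ : Finset (Fin 7)) (hdisj : Disjoint A₁ A₂) (hcover : A₁ ∪ A₂ = Finset.univ) :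
    ¬ (sdPair u₁ A₁ A₂ ∧ sdPair u₂ A₂ A₁ ∧ sdPair v A₁ A₂ ∧ sdPair v A₂ A₁) := by
  have hc : A₂ = A₁ᶜ := by
    ext x
    simp only [Finset.mem_compl]
    constructor
    · intro hx hx'
      exact (Finset.disjoint_left.mp hdisj) hx' hx
    · intro hx
      have := Finset.mem_univ x
      rw [← hcover, Finset.mem_union] at this
      tauto
  subst hc
  rw [sdPair_iff u₁ rk1 h₁, sdPair_iff u₂ rk2 h₂,
      sdPair_iff v (fun g => (g : ℕ)) hv, sdPair_iff v (fun g => (g : ℕ)) hv]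
  exact main_decide A₁
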